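/- Let H be a finite dimensional C*-Hopf algebra with Haar projection e ∈ H and Haar projection τ ∈ H⁰ (dim H = N). Then for any h ∈ H and φ ∈ H⁰: N (φτ₍₁₎)(e) τ₍₂₎(S(h)) = φ(h), where S is the antipode of H and subscripts denote the comultiplication of H⁰ in Sweedler notation. -/

import Mathlib

open TensorProduct BigOperators

set_option maxHeartbeats 1000000
set_option synthInstance.maxHeartbeats 400000

noncomputable section

variable {H : Type*} [Ring H] [HopfAlgebra ℂ H] [StarRing H] [StarModule ℂ H]
  [FiniteDimensional ℂ H]

/-- The convolution product on the dual `H⁰ = H*` of a Hopf algebra: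
`(φψ)(h) = φ(h₍₁₎)ψ(h₍₂₎)`. -/
def dConv (φ ψ : Module.Dual ℂ H) : Module.Dual ℂ H :=
  LinearMap.mul' ℂ ℂ ∘ₗ TensorProduct.map φ ψ ∘ₗ (Coalgebra.comul (R := ℂ))

/-- Auxiliary trilinear functional `x ⊗ (y ⊗ z) ↦ φ(x) τ(y z)`. -/
def auxD (φ τ : Module.Dual ℂ H) : H ⊗[ℂ] (H ⊗[ℂ] H) →ₗ[ℂ] ℂ :=
  LinearMap.mul' ℂ ℂ ∘ₗ TensorProduct.map φ (τ ∘ₗ LinearMap.mul' ℂ H)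

@[simp] lemma auxD_tmul (φ τ : Module.Dual ℂ H) (x y z : H) :
    auxD φ τ (x ⊗ₜ[ℂ] (y ⊗ₜ[ℂ] z)) = φ x * τ (y * z) := by
  simp [auxD]

/-- Auxiliary functional `b ⊗ (c ⊗ z) ↦ ∑ₖ φ(e₍₁₎ᵏ b) τ(e₍₂₎ᵏ (c z))`. -/
def auxK (φ τ : Module.Dual ℂ H) {e : H} (re : Coalgebra.Repr ℂ e (H × H)) :
    H ⊗[ℂ] (H ⊗[ℂ] H) →ₗ[ℂ] ℂ :=
  ∑ k ∈ re.index, LinearMap.mul' ℂ ℂ ∘ₗ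
    TensorProduct.map (φ ∘ₗ LinearMap.mulLeft ℂ (re.left k))
      (τ ∘ₗ LinearMap.mulLeft ℂ (re.right k) ∘ₗ LinearMap.mul' ℂ H)

@[simp] lemma auxK_tmul (φ τ : Module.Dual ℂ H) {e : H} (re : Coalgebra.Repr ℂ e (H × H))
    (b c z : H) :
    auxK φ τ re (b ⊗ₜ[ℂ] (c ⊗ₜ[ℂ] z)) =
      ∑ k ∈ re.index, φ (re.left k * b) * τ (re.right k * (c * z)) := by
  simp [auxK, LinearMap.sum_apply]

/-- Auxiliary functional `z ↦ ∑ φ(e₍₁₎) τ(e₍₂₎ S(z))`, as a linear map. -/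
def auxG (φ τ : Module.Dual ℂ H) (e : H) : H →ₗ[ℂ] ℂ :=
  auxD φ τ ∘ₗ (TensorProduct.assoc ℂ H H H).toLinearMap ∘ₗ
    TensorProduct.mk ℂ (H ⊗[ℂ] H) H (Coalgebra.comul e) ∘ₗ
    HopfAlgebra.antipode (R := ℂ)

lemma auxG_apply (φ τ : Module.Dual ℂ H) (e z : H) :
    auxG φ τ e z = auxD φ τ ((TensorProduct.assoc ℂ H H H)
      ((Coalgebra.comul (R := ℂ) e) ⊗ₜ[ℂ] HopfAlgebra.antipode (R := ℂ) z)) := rfl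

/-- The key identity: `∑ φ(e₍₁₎) τ(e₍₂₎ S(h)) = τ(e) φ(h)`. -/
lemma haar_key (e : H) (τ : Module.Dual ℂ H)
    (heHaar' : ∀ h : H, e * h = (Coalgebra.counit (R := ℂ) h : ℂ) • e)
    (hτHaar : ∀ φ : Module.Dual ℂ H, dConv φ τ = φ 1 • τ)
    (h : H) (φ : Module.Dual ℂ H) (re : Coalgebra.Repr ℂ e (H × H)) :
    ∑ k ∈ re.index, φ (re.left k) * τ (re.right k * HopfAlgebra.antipode (R := ℂ) h)
      = τ e * φ h := by
  classical
  set S : H →ₗ[ℂ] H := HopfAlgebra.antipode (R := ℂ) with hS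
  set rh : Coalgebra.Repr ℂ h (H × H) := Coalgebra.Repr.arbitrary ℂ h with hrh
  set a1 : (i : H × H) → Coalgebra.Repr ℂ (rh.left i) (H × H) :=
    fun i => Coalgebra.Repr.arbitrary ℂ _ with ha1
  set a2 : (i : H × H) → Coalgebra.Repr ℂ (rh.right i) (H × H) :=
    fun i => Coalgebra.Repr.arbitrary ℂ _ with ha2
  -- counit identities
  have hsum1 : ∑ i ∈ rh.index, (Coalgebra.counit (R := ℂ) (rh.left i)) • rh.right i = h := by
    have := congrArg (TensorProduct.lid ℂ H) (Coalgebra.sum_counit_tmul_eq (R := ℂ) rh)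
    simp only [map_sum, TensorProduct.lid_tmul] at this
    simpa using this
  have hsum2 : ∑ i ∈ rh.index, (Coalgebra.counit (R := ℂ) (rh.right i)) • rh.left i = h := by
    have := congrArg (TensorProduct.rid ℂ H) (Coalgebra.sum_tmul_counit_eq (R := ℂ) rh)
    simp only [map_sum, TensorProduct.rid_tmul] at this
    simpa using this
  -- evaluation of auxG
  have hG : ∀ z : H, auxG φ τ e z
      = ∑ k ∈ re.index, φ (re.left k) * τ (re.right k * S z) := by
    intro z
    rw [auxG_apply, ← re.eq, TensorProduct.sum_tmul, map_sum, map_sum]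
    exact Finset.sum_congr rfl fun k _ => by simp [hS]
  -- the goal is `auxG φ τ e h = τ e * φ h`
  rw [← hG h]
  -- comultiplication is multiplicative
  have comul_mul : ∀ a b : H, Coalgebra.comul (R := ℂ) (a * b)
      = Coalgebra.comul a * Coalgebra.comul b := fun a b => by
    simpa using map_mul (Bialgebra.comulAlgHom ℂ H) a b
  -- bridge lemma
  have bridge : ∀ b c z : H,
      auxD φ τ ((TensorProduct.assoc ℂ H H H)
        ((Coalgebra.comul (R := ℂ) e * (b ⊗ₜ[ℂ] c)) ⊗ₜ[ℂ] z))
      = auxK φ τ re (b ⊗ₜ[ℂ] (c ⊗ₜ[ℂ] z)) := by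
    intro b c z
    rw [← re.eq, Finset.sum_mul]
    simp only [Algebra.TensorProduct.tmul_mul_tmul]
    rw [TensorProduct.sum_tmul, map_sum, map_sum]
    simp [mul_assoc]
  -- step 1: `auxG φ τ e h = ∑ᵢ auxD (assoc (Δ(e·h₁ᵢ) ⊗ S h₂ᵢ))`
  have hT1 : auxG φ τ e h = ∑ i ∈ rh.index,
      auxD φ τ ((TensorProduct.assoc ℂ H H H)
        ((Coalgebra.comul (R := ℂ) (e * rh.left i)) ⊗ₜ[ℂ] S (rh.right i))) := by
    conv_lhs => rw [← hsum1]
    rw [map_sum]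
    refine Finset.sum_congr rfl fun i _ => ?_
    rw [heHaar' (rh.left i), auxG_apply]
    simp [smul_tmul', hS]
  -- step 2: expand `Δ(e·h₁ᵢ) = Δe · Δh₁ᵢ` and use the bridge
  have hT2 : ∑ i ∈ rh.index,
      auxD φ τ ((TensorProduct.assoc ℂ H H H)
        ((Coalgebra.comul (R := ℂ) (e * rh.left i)) ⊗ₜ[ℂ] S (rh.right i)))
      = ∑ i ∈ rh.index, ∑ j ∈ (a1 i).index,
          auxK φ τ re ((a1 i).left j ⊗ₜ[ℂ] ((a1 i).right j ⊗ₜ[ℂ] S (rh.right i))) := by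
    refine Finset.sum_congr rfl fun i _ => ?_
    rw [comul_mul, ← (a1 i).eq, Finset.mul_sum, TensorProduct.sum_tmul, map_sum, map_sum]
    exact Finset.sum_congr rfl fun j _ => bridge _ _ _
  -- step 3: coassociativity
  have hT3 : ∑ i ∈ rh.index, ∑ j ∈ (a1 i).index,
      auxK φ τ re ((a1 i).left j ⊗ₜ[ℂ] ((a1 i).right j ⊗ₜ[ℂ] S (rh.right i)))
      = ∑ i ∈ rh.index, ∑ j ∈ (a2 i).index,
          auxK φ τ re (rh.left i ⊗ₜ[ℂ] ((a2 i).left j ⊗ₜ[ℂ] S ((a2 i).right j))) := by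
    have hco := Coalgebra.sum_tmul_tmul_eq (R := ℂ) rh a1 a2
    have := congrArg (fun w => auxK φ τ re ((LinearMap.lTensor H (LinearMap.lTensor H S)) w)) hco
    simpa only [map_sum, LinearMap.lTensor_tmul] using this
  -- step 4: the antipode axiom collapses the inner sum
  have hT4 : ∑ i ∈ rh.index, ∑ j ∈ (a2 i).index,
      auxK φ τ re (rh.left i ⊗ₜ[ℂ] ((a2 i).left j ⊗ₜ[ℂ] S ((a2 i).right j)))
      = ∑ k ∈ re.index, φ (re.left k * h) * τ (re.right k) := by
    have inner : ∀ i ∈ rh.index, ∑ j ∈ (a2 i).index,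
        auxK φ τ re (rh.left i ⊗ₜ[ℂ] ((a2 i).left j ⊗ₜ[ℂ] S ((a2 i).right j)))
        = ∑ k ∈ re.index, φ (re.left k * rh.left i) *
            ((Coalgebra.counit (R := ℂ) (rh.right i)) * τ (re.right k)) := by
      intro i _
      simp only [auxK_tmul]
      rw [Finset.sum_comm]
      refine Finset.sum_congr rfl fun k _ => ?_
      rw [← Finset.mul_sum, ← map_sum, ← Finset.mul_sum, hS,
        HopfAlgebra.sum_mul_antipode_eq_smul (a2 i)]
      simp [mul_smul_comm, mul_comm, mul_left_comm]
    rw [Finset.sum_congr rfl inner, Finset.sum_comm]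
    refine Finset.sum_congr rfl fun k _ => ?_
    have : φ (re.left k * h) = ∑ i ∈ rh.index,
        (Coalgebra.counit (R := ℂ) (rh.right i)) * φ (re.left k * rh.left i) := by
      conv_lhs => rw [← hsum2]
      rw [Finset.mul_sum, map_sum]
      exact Finset.sum_congr rfl fun i _ => by rw [mul_smul_comm, map_smul, smul_eq_mul]
    rw [this, Finset.sum_mul]
    exact Finset.sum_congr rfl fun i _ => by ring
  -- the right-integral property of τ, in element form
  have R1 : ∑ k ∈ re.index, τ (re.right k) • re.left k = τ e • (1 : H) := by
    have hsep : ∀ ψ : Module.Dual ℂ H,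
        ψ (∑ k ∈ re.index, τ (re.right k) • re.left k) = ψ (τ e • (1 : H)) := by
      intro ψ
      have hdc : dConv ψ τ e = ∑ k ∈ re.index, ψ (re.left k) * τ (re.right k) := by
        simp only [dConv, LinearMap.coe_comp, Function.comp_apply]
        rw [← re.eq, map_sum, map_sum]
        simp
      have hv := congrFun (congrArg DFunLike.coe (hτHaar ψ)) e
      rw [hdc] at hv
      simp only [map_sum, map_smul, smul_eq_mul, LinearMap.smul_apply] at hv ⊢
      calc ∑ k ∈ re.index, τ (re.right k) * ψ (re.left k)
          = ∑ k ∈ re.index, ψ (re.left k) * τ (re.right k) :=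
            Finset.sum_congr rfl fun k _ => mul_comm _ _
        _ = τ e * ψ 1 := by rw [hv]; ring
    rw [← sub_eq_zero, ← Module.forall_dual_apply_eq_zero_iff ℂ]
    intro ψ
    simp only [map_sub, hsep ψ, sub_self]
  -- conclude
  have final : ∑ k ∈ re.index, φ (re.left k * h) * τ (re.right k) = τ e * φ h := by
    have : ∑ k ∈ re.index, φ (re.left k * h) * τ (re.right k)
        = φ ((∑ k ∈ re.index, τ (re.right k) • re.left k) * h) := by
      rw [Finset.sum_mul, map_sum]
      exact Finset.sum_congr rfl fun k _ => by
        rw [smul_mul_assoc, map_smul, smul_eq_mul]; ring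
    rw [this, R1, smul_mul_assoc, one_mul, map_smul, smul_eq_mul]
  rw [hT1, hT2, hT3, hT4, final]

/-- Let `H` be a finite dimensional C*-Hopf algebra with Haar (distinguished)
projection `e ∈ H` and Haar projection `τ ∈ H⁰`, `N = dim H`.  Writing
`Δ⁰(τ) = ∑ i, τ1 i ⊗ τ2 i` (Sweedler decomposition of the comultiplication of the dual,
i.e. `τ(ab) = ∑ i, τ1 i (a) * τ2 i (b)`), one has for any `h ∈ H` and `φ ∈ H⁰`:
`N • ∑ i (φ τ₍₁₎)(e) τ₍₂₎(S(h)) = φ(h)`. -/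
theorem haar_expansion
    (e : H) (τ : Module.Dual ℂ H)
    -- `e` is the distinguished projection of `H`
    (he_idem : e * e = e) (he_star : star e = e)
    (heHaar : ∀ h : H, h * e = (Coalgebra.counit (R := ℂ) h : ℂ) • e)
    (heHaar' : ∀ h : H, e * h = (Coalgebra.counit (R := ℂ) h : ℂ) • e)
    -- `τ` is the distinguished projection of `H⁰` (the Haar trace on `H`)
    (hτ_idem : dConv τ τ = τ)
    (hτHaar : ∀ φ : Module.Dual ℂ H, dConv φ τ = φ 1 • τ)
    (hτHaar' : ∀ φ : Module.Dual ℂ H, dConv τ φ = φ 1 • τ)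
    (hτtrace : ∀ a b : H, τ (a * b) = τ (b * a))
    -- normalization relating the two Haar projections: `N τ(e) = 1`
    (hnorm : (Module.finrank ℂ H : ℂ) * τ e = 1)
    -- a Sweedler decomposition `Δ⁰(τ) = ∑ i, τ1 i ⊗ τ2 i` of the dual comultiplication of `τ`
    (m : ℕ) (τ1 τ2 : Fin m → Module.Dual ℂ H)
    (hτΔ : ∀ a b : H, τ (a * b) = ∑ i, τ1 i a * τ2 i b)
    (h : H) (φ : Module.Dual ℂ H) :
    (Module.finrank ℂ H : ℂ) *
        ∑ i, (dConv φ (τ1 i)) e * τ2 i (HopfAlgebra.antipode (R := ℂ) h) = φ h := by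
  classical
  set re : Coalgebra.Repr ℂ e (H × H) := Coalgebra.Repr.arbitrary ℂ e with hre
  have hd : ∀ ψ : Module.Dual ℂ H,
      dConv φ ψ e = ∑ k ∈ re.index, φ (re.left k) * ψ (re.right k) := by
    intro ψ
    simp only [dConv, LinearMap.coe_comp, Function.comp_apply]
    rw [← re.eq, map_sum, map_sum]
    simp
  have hmain : ∑ i, (dConv φ (τ1 i)) e * τ2 i (HopfAlgebra.antipode (R := ℂ) h)
      = τ e * φ h := by
    calc ∑ i, (dConv φ (τ1 i)) e * τ2 i (HopfAlgebra.antipode (R := ℂ) h)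
        = ∑ i, (∑ k ∈ re.index, φ (re.left k) * τ1 i (re.right k)) *
            τ2 i (HopfAlgebra.antipode (R := ℂ) h) := by
          exact Finset.sum_congr rfl fun i _ => by rw [hd (τ1 i)]
      _ = ∑ k ∈ re.index, ∑ i, (φ (re.left k) * τ1 i (re.right k)) *
            τ2 i (HopfAlgebra.antipode (R := ℂ) h) := by
          simp_rw [Finset.sum_mul]
          exact Finset.sum_comm
      _ = ∑ k ∈ re.index, φ (re.left k) *
            τ (re.right k * HopfAlgebra.antipode (R := ℂ) h) := by
          refine Finset.sum_congr rfl fun k _ => ?_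
          rw [hτΔ, Finset.mul_sum]
          exact Finset.sum_congr rfl fun i _ => by ring
      _ = τ e * φ h := haar_key e τ heHaar' hτHaar h φ re
  rw [hmain, ← mul_assoc, hnorm, one_mul]
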